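/- Define weights W(x) = 1 if x ∈ (1/2,1], W(x) = 1/2 if x ∈ (1/4,1/2], and W(x) = 3x if x ∈ (0,1/4]. Then any bin B containing items with sizes in (0,1] whose total size is at least 2/3 has total weight at least 1. -/
import Mathlib


/-- The weight function: large items (size in (1/2,1]) have weight 1, medium and small items
(size in (1/4,1/2]) have weight 1/2, tiny items (size in (0,1/4]) have weight 3x. -/
noncomputable def W (x : ℝ) : ℝ :=
  if 1/2 < x then 1 else if 1/4 < x then 1/2 else 3 * x

lemma W_nonneg {x : ℝ} (hx : 0 < x) : 0 ≤ W x := by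
  unfold W; split_ifs <;> linarith

lemma W_sum_nonneg (s : Multiset ℝ) (h : ∀ x ∈ s, 0 < x) : 0 ≤ (s.map W).sum := by
  apply Multiset.sum_nonneg
  intro a ha
  obtain ⟨x, hx, rfl⟩ := Multiset.mem_map.mp ha
  exact W_nonneg (h x hx)

lemma W_medium {x : ℝ} (h1 : 1/4 < x) (h2 : x ≤ 1/2) : W x = 1/2 := by
  unfold W
  rw [if_neg (by linarith), if_pos h1]

lemma W_tiny {x : ℝ} (h : x ≤ 1/4) : W x = 3 * x := by
  unfold W
  rw [if_neg (by linarith), if_neg (by linarith)]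

lemma W_sum_tiny (s : Multiset ℝ) (h : ∀ x ∈ s, x ≤ 1/4) : (s.map W).sum = 3 * s.sum := by
  rw [Multiset.map_congr rfl (fun x hx => W_tiny (h x hx))]
  induction s using Multiset.induction with
  | empty => simp
  | cons a s ih =>
    simp only [Multiset.map_cons, Multiset.sum_cons,
      ih (fun x hx => h x (Multiset.mem_cons_of_mem hx))]
    ring

/-- Any bin (a multiset of item sizes in (0,1] summing to at most 1) of load at least 2/3
has weight at least 1. -/
theorem stmt3 (B : Multiset ℝ) (hB : ∀ x ∈ B, 0 < x ∧ x ≤ 1)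
    (hcap : B.sum ≤ 1) (hvol : 2/3 ≤ B.sum) :
    1 ≤ (B.map W).sum := by
  by_cases h1 : ∃ x ∈ B, 1/2 < x
  · obtain ⟨x, hx, hx2⟩ := h1
    rw [← Multiset.cons_erase hx, Multiset.map_cons, Multiset.sum_cons]
    have hW : W x = 1 := by unfold W; rw [if_pos hx2]
    have hrest : 0 ≤ ((B.erase x).map W).sum :=
      W_sum_nonneg _ (fun z hz => (hB z (Multiset.mem_of_mem_erase hz)).1)
    linarith
  · push_neg at h1
    by_cases h2 : ∃ x ∈ B, 1/4 < x
    · obtain ⟨y, hy, hy4⟩ := h2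
      set B' := B.erase y with hB'
      have hcons : y ::ₘ B' = B := Multiset.cons_erase hy
      by_cases h3 : ∃ z ∈ B', 1/4 < z
      · obtain ⟨z, hz, hz4⟩ := h3
        have hzB : z ∈ B := Multiset.mem_of_mem_erase hz
        have hcons2 : z ::ₘ B'.erase z = B' := Multiset.cons_erase hz
        rw [← hcons, ← hcons2, Multiset.map_cons, Multiset.map_cons,
          Multiset.sum_cons, Multiset.sum_cons]
        have hWy : W y = 1/2 := W_medium hy4 (h1 y hy)
        have hWz : W z = 1/2 := W_medium hz4 (h1 z hzB)
        have hrest : 0 ≤ ((B'.erase z).map W).sum :=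
          W_sum_nonneg _ (fun w hw =>
            (hB w (Multiset.mem_of_mem_erase (Multiset.mem_of_mem_erase hw))).1)
        linarith
      · push_neg at h3
        have hsum' : y + B'.sum = B.sum := by rw [← hcons]; simp
        rw [← hcons, Multiset.map_cons, Multiset.sum_cons, W_sum_tiny B' h3]
        have hWy : W y = 1/2 := W_medium hy4 (h1 y hy)
        have hy2 : y ≤ 1/2 := h1 y hy
        linarith
    · push_neg at h2
      rw [W_sum_tiny B h2]
      linarith
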